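/- Let p, q ∈ ℝ² with x_q ≤ x_p. Then for every y ∈ ℝ, δ_{pq}(y) = δ'_{pq}(y). -/
import Mathlib


open Metric Set

noncomputable section

/-- Points of the Euclidean plane ℝ². -/
abbrev Pt : Type := EuclideanSpace ℝ (Fin 2)

/-- The point (x, y) ∈ ℝ². -/
def pt (x y : ℝ) : Pt := (WithLp.equiv 2 (Fin 2 → ℝ)).symm ![x, y]

/-- The leftward horizontal halfline ←p = {(x, y_p) : x ≤ x_p}. -/
def leftRay (p : Pt) : Set Pt := {z : Pt | z 1 = p 1 ∧ z 0 ≤ p 0}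

/-- The rightward horizontal halfline →p = {(x, y_p) : x ≥ x_p}. -/
def rightRay (p : Pt) : Set Pt := {z : Pt | z 1 = p 1 ∧ p 0 ≤ z 0}

/-- h_{←p}(q): Euclidean distance from q to the leftward halfline at p. -/
def hL (p q : Pt) : ℝ := infDist q (leftRay p)

/-- h_{→p}(q): Euclidean distance from q to the rightward halfline at p. -/
def hR (p q : Pt) : ℝ := infDist q (rightRay p)

/-- h_{←S}(q) = max_{p ∈ S} h_{←p}(q). -/
def hLS (S : Finset Pt) (hS : S.Nonempty) (q : Pt) : ℝ := S.sup' hS fun p => hL p q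

/-- h_{→S}(q) = max_{p ∈ S} h_{→p}(q). -/
def hRS (S : Finset Pt) (hS : S.Nonempty) (q : Pt) : ℝ := S.sup' hS fun p => hR p q

/-- δ_{pq}(y) = inf_x max{‖(x,y) − p‖, ‖(x,y) − q‖}. -/
def delta (p q : Pt) (y : ℝ) : ℝ := ⨅ x : ℝ, max ‖pt x y - p‖ ‖pt x y - q‖

/-- δ'_{pq}(y) = inf_x max{h_{←q}((x,y)), h_{→p}((x,y))}. -/
def delta' (p q : Pt) (y : ℝ) : ℝ := ⨅ x : ℝ, max (hL q (pt x y)) (hR p (pt x y))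

lemma le_infDist' {s : Set Pt} (hs : s.Nonempty) {x : Pt} {b : ℝ}
    (h : ∀ w ∈ s, b ≤ dist x w) : b ≤ infDist x s := by
  by_contra hb
  push_neg at hb
  obtain ⟨w, hw, hlt⟩ := (infDist_lt_iff hs).mp hb
  exact absurd (h w hw) (not_le.mpr hlt)

lemma dist_pt (x y : ℝ) (w : Pt) :
    dist (pt x y) w = Real.sqrt ((x - w 0)^2 + (y - w 1)^2) := by
  rw [EuclideanSpace.dist_eq, Fin.sum_univ_two]
  simp [pt, Real.dist_eq, sq_abs]

lemma norm_sub_pt (x y : ℝ) (w : Pt) :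
    ‖pt x y - w‖ = Real.sqrt ((x - w 0)^2 + (y - w 1)^2) := by
  rw [← dist_eq_norm, dist_pt]

lemma hL_eq (q : Pt) (x y : ℝ) :
    hL q (pt x y) = Real.sqrt ((x - min x (q 0))^2 + (y - q 1)^2) := by
  have hm : pt (min x (q 0)) (q 1) ∈ leftRay q := by
    refine ⟨by simp [pt], ?_⟩
    simp [pt]
  unfold hL
  apply le_antisymm
  · calc infDist (pt x y) (leftRay q) ≤ dist (pt x y) (pt (min x (q 0)) (q 1)) :=
        infDist_le_dist_of_mem hm
      _ = Real.sqrt ((x - min x (q 0))^2 + (y - q 1)^2) := by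
        rw [dist_pt]; simp [pt]
  · apply le_infDist' ⟨_, hm⟩
    intro w hw
    obtain ⟨h1, h2⟩ := hw
    rw [dist_pt, h1]
    apply Real.sqrt_le_sqrt
    have : (x - min x (q 0))^2 ≤ (x - w 0)^2 := by
      rcases le_total x (q 0) with hx | hx
      · simp [min_eq_left hx]; positivity
      · rw [min_eq_right hx]; nlinarith
    linarith

lemma hR_eq (p : Pt) (x y : ℝ) :
    hR p (pt x y) = Real.sqrt ((x - max x (p 0))^2 + (y - p 1)^2) := by
  have hm : pt (max x (p 0)) (p 1) ∈ rightRay p := by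
    refine ⟨by simp [pt], ?_⟩
    simp [pt]
  unfold hR
  apply le_antisymm
  · calc infDist (pt x y) (rightRay p) ≤ dist (pt x y) (pt (max x (p 0)) (p 1)) :=
        infDist_le_dist_of_mem hm
      _ = Real.sqrt ((x - max x (p 0))^2 + (y - p 1)^2) := by
        rw [dist_pt]; simp [pt]
  · apply le_infDist' ⟨_, hm⟩
    intro w hw
    obtain ⟨h1, h2⟩ := hw
    rw [dist_pt, h1]
    apply Real.sqrt_le_sqrt
    have : (x - max x (p 0))^2 ≤ (x - w 0)^2 := by
      rcases le_total x (p 0) with hx | hx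
      · rw [max_eq_right hx]; nlinarith
      · simp [max_eq_left hx]; positivity
    linarith

theorem stmt_6 (p q : Pt) (h : q 0 ≤ p 0) (y : ℝ) : delta p q y = delta' p q y := by
  have hf : ∀ x : ℝ, max ‖pt x y - p‖ ‖pt x y - q‖ =
      max (Real.sqrt ((x - p 0)^2 + (y - p 1)^2)) (Real.sqrt ((x - q 0)^2 + (y - q 1)^2)) := by
    intro x; rw [norm_sub_pt, norm_sub_pt]
  have hg : ∀ x : ℝ, max (hL q (pt x y)) (hR p (pt x y)) =
      max (Real.sqrt ((x - min x (q 0))^2 + (y - q 1)^2))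
          (Real.sqrt ((x - max x (p 0))^2 + (y - p 1)^2)) := by
    intro x; rw [hL_eq, hR_eq]
  have hdf : delta p q y = ⨅ x : ℝ, max (Real.sqrt ((x - p 0)^2 + (y - p 1)^2))
      (Real.sqrt ((x - q 0)^2 + (y - q 1)^2)) := iInf_congr hf
  have hdg : delta' p q y = ⨅ x : ℝ, max (Real.sqrt ((x - min x (q 0))^2 + (y - q 1)^2))
      (Real.sqrt ((x - max x (p 0))^2 + (y - p 1)^2)) := iInf_congr hg
  rw [hdf, hdg]
  have hbf : BddBelow (Set.range fun x : ℝ => max (Real.sqrt ((x - p 0)^2 + (y - p 1)^2))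
      (Real.sqrt ((x - q 0)^2 + (y - q 1)^2))) := by
    refine ⟨0, ?_⟩
    rintro _ ⟨x, rfl⟩
    exact le_trans (Real.sqrt_nonneg _) (le_max_left _ _)
  have hbg : BddBelow (Set.range fun x : ℝ => max (Real.sqrt ((x - min x (q 0))^2 + (y - q 1)^2))
      (Real.sqrt ((x - max x (p 0))^2 + (y - p 1)^2))) := by
    refine ⟨0, ?_⟩
    rintro _ ⟨x, rfl⟩
    exact le_trans (Real.sqrt_nonneg _) (le_max_left _ _)
  apply le_antisymm
  · -- inf f ≤ inf g : for each x, f (clamp x) ≤ g x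
    apply le_ciInf
    intro x
    set c : ℝ := min (max x (q 0)) (p 0) with hc
    have h1 : (c - p 0)^2 ≤ (x - max x (p 0))^2 := by
      rcases le_total x (p 0) with hx | hx
      · rw [max_eq_right hx]
        rcases le_total x (q 0) with hxq | hxq
        · have hcq : c = q 0 := by rw [hc, max_eq_right hxq, min_eq_left h]
          rw [hcq]; nlinarith
        · have hcx : c = x := by rw [hc, max_eq_left hxq, min_eq_left hx]
          rw [hcx]
      · rw [max_eq_left hx]
        have hcp : c = p 0 := by
          rw [hc, max_eq_left (le_trans h hx), min_eq_right hx]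
        rw [hcp]
        nlinarith
    have h2 : (c - q 0)^2 ≤ (x - min x (q 0))^2 := by
      rcases le_total x (q 0) with hx | hx
      · have hcq : c = q 0 := by rw [hc, max_eq_right hx, min_eq_left h]
        rw [hcq, min_eq_left hx]
        nlinarith
      · rw [min_eq_right hx]
        have hc1 : q 0 ≤ c := le_min (le_trans hx (le_max_left _ _)) h
        have hc2 : c ≤ x := le_trans (min_le_left _ _) (max_le le_rfl hx)
        nlinarith
    refine le_trans (ciInf_le hbf c) (max_le ?_ ?_)
    · exact le_trans (Real.sqrt_le_sqrt (by linarith)) (le_max_right _ _)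
    · exact le_trans (Real.sqrt_le_sqrt (by linarith)) (le_max_left _ _)
  · -- inf g ≤ inf f : g ≤ f pointwise
    apply le_ciInf
    intro x
    refine le_trans (ciInf_le hbg x) ?_
    have h1 : (x - min x (q 0))^2 ≤ (x - q 0)^2 := by
      rcases le_total x (q 0) with hx | hx
      · rw [min_eq_left hx]; nlinarith
      · rw [min_eq_right hx]
    have h2 : (x - max x (p 0))^2 ≤ (x - p 0)^2 := by
      rcases le_total x (p 0) with hx | hx
      · rw [max_eq_right hx]
      · rw [max_eq_left hx]; nlinarith
    refine max_le ?_ ?_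
    · exact le_trans (Real.sqrt_le_sqrt (by linarith)) (le_max_right _ _)
    · exact le_trans (Real.sqrt_le_sqrt (by linarith)) (le_max_left _ _)
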